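/- Let A be a 2×2 matrix with strictly positive entries. Then the induced map on directions θ ↦ (direction of A(cos θ, sin θ)) is a strict contraction of the Hilbert projective metric on the open positive quadrant of directions; in particular, for any two unit vectors u, v in the open positive cone, the Hilbert projective distance between A u and A v is at most c · (Hilbert distance between u and v) for some constant c = c(A) < 1. -/

import Mathlib

open Real

private lemma birk_deriv (a b c d : ℝ) (ha : 0 < a) (hb : 0 < b) (hc : 0 < c) (hd : 0 < d)
    (x : ℝ) :
    HasDerivAt (fun x => Real.log (a * Real.exp x + b) - Real.log (c * Real.exp x + d))
      (a * Real.exp x / (a * Real.exp x + b) - c * Real.exp x / (c * Real.exp x + d)) x := by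
  have h1 : HasDerivAt (fun x => a * Real.exp x + b) (a * Real.exp x) x := by
    simpa using ((Real.hasDerivAt_exp x).const_mul a).add_const b
  have h2 : HasDerivAt (fun x => c * Real.exp x + d) (c * Real.exp x) x := by
    simpa using ((Real.hasDerivAt_exp x).const_mul c).add_const d
  have p1 : a * Real.exp x + b ≠ 0 := by positivity
  have p2 : c * Real.exp x + d ≠ 0 := by positivity
  exact (h1.log p1).sub (h2.log p2)

private lemma birk_bound (a b c d : ℝ) (ha : 0 < a) (hb : 0 < b) (hc : 0 < c) (hd : 0 < d)
    (x : ℝ) :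
    |a * Real.exp x / (a * Real.exp x + b) - c * Real.exp x / (c * Real.exp x + d)|
      ≤ |a * d - b * c| / (a * d + b * c) := by
  set E := Real.exp x with hE
  have hEpos : 0 < E := Real.exp_pos x
  clear_value E
  have p1 : 0 < a * E + b := by positivity
  have p2 : 0 < c * E + d := by positivity
  have key : a * E / (a * E + b) - c * E / (c * E + d)
      = E * (a * d - b * c) / ((a * E + b) * (c * E + d)) := by
    field_simp; ring
  rw [key, abs_div, abs_mul, abs_of_pos hEpos, abs_of_pos (mul_pos p1 p2)]
  rw [div_le_div_iff₀ (mul_pos p1 p2) (by positivity)]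
  have habs : 0 ≤ |a * d - b * c| := abs_nonneg _
  have h1 : E * (a * d + b * c) ≤ (a * E + b) * (c * E + d) := by
    have expand : (a * E + b) * (c * E + d)
        = a * c * E ^ 2 + (a * d + b * c) * E + b * d := by ring
    rw [expand]
    nlinarith [mul_pos (mul_pos ha hc) (pow_pos hEpos 2), mul_pos hb hd]
  nlinarith [mul_le_mul_of_nonneg_left h1 habs]

private lemma birk_lip (a b c d : ℝ) (ha : 0 < a) (hb : 0 < b) (hc : 0 < c) (hd : 0 < d)
    (x y : ℝ) :
    |(Real.log (a * Real.exp x + b) - Real.log (c * Real.exp x + d))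
      - (Real.log (a * Real.exp y + b) - Real.log (c * Real.exp y + d))|
      ≤ |a * d - b * c| / (a * d + b * c) * |x - y| := by
  have := Convex.norm_image_sub_le_of_norm_hasDerivWithin_le
    (f := fun x => Real.log (a * Real.exp x + b) - Real.log (c * Real.exp x + d))
    (f' := fun x => a * Real.exp x / (a * Real.exp x + b) - c * Real.exp x / (c * Real.exp x + d))
    (C := |a * d - b * c| / (a * d + b * c)) (s := Set.univ)
    (fun z _ => (birk_deriv a b c d ha hb hc hd z).hasDerivWithinAt)
    (fun z _ => birk_bound a b c d ha hb hc hd z) convex_univ (Set.mem_univ y) (Set.mem_univ x)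
  simpa [Real.norm_eq_abs] using this

theorem stmt5 (A : Matrix (Fin 2) (Fin 2) ℝ) (hpos : ∀ i j, 0 < A i j) :
    ∃ c : ℝ, 0 ≤ c ∧ c < 1 ∧
      ∀ u v : Fin 2 → ℝ, (∀ j, 0 < u j) → (∀ j, 0 < v j) →
        (u 0) ^ 2 + (u 1) ^ 2 = 1 → (v 0) ^ 2 + (v 1) ^ 2 = 1 →
        |Real.log ((A.mulVec u 0 * A.mulVec v 1) / (A.mulVec u 1 * A.mulVec v 0))|
          ≤ c * |Real.log ((u 0 * v 1) / (u 1 * v 0))| := by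
  set a := A 0 0; set b := A 0 1; set c := A 1 0; set d := A 1 1
  have ha := hpos 0 0; have hb := hpos 0 1; have hc := hpos 1 0; have hd := hpos 1 1
  refine ⟨|a * d - b * c| / (a * d + b * c), by positivity, ?_, ?_⟩
  · rw [div_lt_one (by positivity)]
    rcases abs_cases (a * d - b * c) with ⟨h, _⟩ | ⟨h, _⟩ <;> rw [h] <;> nlinarith
  · intro u v hu hv _ _
    have hu0 := hu 0; have hu1 := hu 1; have hv0 := hv 0; have hv1 := hv 1
    have hmv : ∀ w : Fin 2 → ℝ, A.mulVec w 0 = a * w 0 + b * w 1 ∧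
        A.mulVec w 1 = c * w 0 + d * w 1 := by
      intro w
      constructor <;> simp [Matrix.mulVec, dotProduct, Fin.sum_univ_two, a, b, c, d]
    obtain ⟨hu0', hu1'⟩ := hmv u
    obtain ⟨hv0', hv1'⟩ := hmv v
    set x := Real.log (u 0) - Real.log (u 1) with hx
    set y := Real.log (v 0) - Real.log (v 1) with hy
    have hex : Real.exp x = u 0 / u 1 := by
      rw [hx, Real.exp_sub, Real.exp_log hu0, Real.exp_log hu1]
    have hey : Real.exp y = v 0 / v 1 := by
      rw [hy, Real.exp_sub, Real.exp_log hv0, Real.exp_log hv1]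
    have key := birk_lip a b c d ha hb hc hd x y
    -- rewrite the left side
    have l1 : a * Real.exp x + b = (a * u 0 + b * u 1) / u 1 := by
      rw [hex]; field_simp
    have l2 : c * Real.exp x + d = (c * u 0 + d * u 1) / u 1 := by
      rw [hex]; field_simp
    have l3 : a * Real.exp y + b = (a * v 0 + b * v 1) / v 1 := by
      rw [hey]; field_simp
    have l4 : c * Real.exp y + d = (c * v 0 + d * v 1) / v 1 := by
      rw [hey]; field_simp
    have pu0 : 0 < a * u 0 + b * u 1 := by positivity
    have pu1 : 0 < c * u 0 + d * u 1 := by positivity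
    have pv0 : 0 < a * v 0 + b * v 1 := by positivity
    have pv1 : 0 < c * v 0 + d * v 1 := by positivity
    have LHS : Real.log ((A.mulVec u 0 * A.mulVec v 1) / (A.mulVec u 1 * A.mulVec v 0))
        = (Real.log (a * Real.exp x + b) - Real.log (c * Real.exp x + d))
          - (Real.log (a * Real.exp y + b) - Real.log (c * Real.exp y + d)) := by
      rw [hu0', hu1', hv0', hv1', l1, l2, l3, l4,
        Real.log_div (by positivity) (by positivity),
        Real.log_mul (by positivity) (by positivity),
        Real.log_mul (by positivity) (by positivity),
        Real.log_div pu0.ne' hu1.ne', Real.log_div pu1.ne' hu1.ne',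
        Real.log_div pv0.ne' hv1.ne', Real.log_div pv1.ne' hv1.ne']
      ring
    have RHS : Real.log ((u 0 * v 1) / (u 1 * v 0)) = x - y := by
      rw [Real.log_div (by positivity) (by positivity),
        Real.log_mul hu0.ne' hv1.ne', Real.log_mul hu1.ne' hv0.ne', hx, hy]
      ring
    rw [LHS, RHS]
    exact key
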